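/- Let S = {X_α, p^β_α, α < β < τ} be an almost continuous inverse system with skeletal bonding maps, X = a-lim S, and U ⊆ X open. Then α ∉ q(U) if and only if (p^{α+1}_α)⁻¹( Int cl(p_α(U)) ) ⊆ cl(p_{α+1}(U)). -/

import Mathlib

open Topology Order

universe u

/-- An inverse system of topological spaces indexed by the ordinals below `τ`,
with continuous surjective bonding maps. -/
structure InvSystem (τ : Ordinal.{u}) where
  X : Ordinal.{u} → Type u
  topo : ∀ α, TopologicalSpace (X α)
  p : ∀ α β, α ≤ β → X β → X α
  p_cont : ∀ α β (h : α ≤ β), Continuous (p α β h)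
  p_surj : ∀ α β (h : α ≤ β), β < τ → Function.Surjective (p α β h)
  p_id : ∀ α (x : X α), p α α le_rfl x = x
  p_comp : ∀ α β γ (h₁ : α ≤ β) (h₂ : β ≤ γ) (x : X γ),
    p α β h₁ (p β γ h₂ x) = p α γ (h₁.trans h₂) x

attribute [instance] InvSystem.topo

namespace InvSystem

variable {τ : Ordinal.{u}} (S : InvSystem τ)

/-- The inverse limit of the subsystem indexed by the ordinals below `γ`. -/
def lim (γ : Ordinal.{u}) : Set (∀ α : {o : Ordinal.{u} // o < γ}, S.X α.1) :=
  {f | ∀ (a b : {o : Ordinal.{u} // o < γ}) (h : a.1 ≤ b.1), S.p a.1 b.1 h (f b) = f a}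

/-- The canonical map from `X γ` to the inverse limit of the subsystem below `γ`. -/
def diag (γ : Ordinal.{u}) (x : S.X γ) : ↥(S.lim γ) :=
  ⟨fun a => S.p a.1 γ a.2.le x, fun a b h => S.p_comp a.1 b.1 γ h b.2.le x⟩

/-- The system is almost continuous: for every limit ordinal `γ < τ`, `X γ` embeds
densely into the inverse limit of the subsystem below `γ`, compatibly with the
projections. -/
def AlmostContinuous : Prop :=
  ∀ γ : Ordinal.{u}, γ < τ → Order.IsSuccLimit γ →
    Topology.IsEmbedding (S.diag γ) ∧ DenseRange (S.diag γ)

variable (A : Set (∀ α : {o : Ordinal.{u} // o < τ}, S.X α.1))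

/-- The `α`-th limit projection restricted to `A`. -/
def proj (α : Ordinal.{u}) (h : α < τ) : ↥A → S.X α :=
  fun x => x.1 ⟨α, h⟩

/-- `A` is the almost limit of `S`: it is a subspace of the inverse limit whose
projections are onto the `X α`. -/
def IsALim : Prop :=
  A ⊆ S.lim τ ∧ ∀ (α : Ordinal.{u}) (h : α < τ), Function.Surjective (S.proj A α h)

/-- The rank of a subset `U` of the almost limit `A`. -/
def rank (U : Set ↥A) : Set Ordinal.{u} :=
  {α | ∃ h : succ α < τ,
    (interior ((S.p α (succ α) (le_succ α) ⁻¹'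
        closure (S.proj A α ((lt_succ α).trans h) '' U)) \
      closure (S.proj A (succ α) h '' U))).Nonempty}

end InvSystem

/-- A continuous map is skeletal if the interior of the closure of the image of
every nonempty open set is nonempty. -/
def IsSkeletalMap {X Y : Type*} [TopologicalSpace X] [TopologicalSpace Y] (f : X → Y) : Prop :=
  Continuous f ∧
  ∀ U : Set X, IsOpen U → U.Nonempty → (interior (closure (f '' U))).Nonempty

/-- A continuous map is nearly open if `f(U) ⊆ Int cl f(U)` for every open `U`. -/
def IsNearlyOpenMap {X Y : Type*} [TopologicalSpace X] [TopologicalSpace Y] (f : X → Y) : Prop :=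
  ∀ U : Set X, IsOpen U → f '' U ⊆ interior (closure (f '' U))

open Order InvSystem in
/-- For an almost continuous inverse system with skeletal bonding maps, `A = a-lim S`, and
`U ⊆ A` open: `α ∉ q(U)` iff `(p^{α+1}_α)⁻¹(Int cl p_α(U)) ⊆ cl p_{α+1}(U)`. -/
theorem not_mem_rank_iff {τ : Ordinal.{u}} (S : InvSystem τ)
    (A : Set (∀ α : {o : Ordinal.{u} // o < τ}, S.X α.1))
    (hac : S.AlmostContinuous)
    (hskel : ∀ (α β : Ordinal.{u}) (h : α ≤ β), β < τ → IsSkeletalMap (S.p α β h))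
    (hA : S.IsALim A)
    (U : Set ↥A) (hU : IsOpen U) (α : Ordinal.{u}) (h : succ α < τ) :
    α ∉ S.rank A U ↔
      S.p α (succ α) (le_succ α) ⁻¹'
          interior (closure (S.proj A α ((lt_succ α).trans h) '' U)) ⊆
        closure (S.proj A (succ α) h '' U) := by
  set f := S.p α (succ α) (le_succ α) with hf
  set C := closure (S.proj A α ((lt_succ α).trans h) '' U) with hC
  set D := closure (S.proj A (succ α) h '' U) with hD
  have hfc : Continuous f := S.p_cont _ _ _
  constructor
  · intro hnot x hx
    by_contra hxD
    apply hnot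
    refine ⟨h, x, ?_⟩
    have hopen : IsOpen (f ⁻¹' interior C \ D) :=
      (isOpen_interior.preimage hfc).sdiff isClosed_closure
    have hsub : f ⁻¹' interior C \ D ⊆ f ⁻¹' C \ D :=
      fun y hy => ⟨(interior_subset : interior C ⊆ C) hy.1, hy.2⟩
    exact interior_maximal hsub hopen ⟨hx, hxD⟩
  · rintro hsub ⟨h', hne⟩
    set V := interior (f ⁻¹' C \ D) with hV
    obtain ⟨w, hw⟩ := (hskel α (succ α) (le_succ α) h).2 V isOpen_interior hne
    have hfV : f '' V ⊆ C := by
      rintro _ ⟨v, hv, rfl⟩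
      exact (interior_subset hv).1
    have hWsub : interior (closure (f '' V)) ⊆ interior C :=
      interior_mono (closure_minimal hfV isClosed_closure)
    obtain ⟨y, hy1, v, hv, rfl⟩ :=
      mem_closure_iff.mp (interior_subset hw) _ isOpen_interior hw
    have hvD : v ∈ D := hsub (hWsub hy1)
    exact (interior_subset hv).2 hvD
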